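/- Under the billiard polygon setup with h the support function of an ellipse and under the Joachimsthal hypothesis, letting αᵢ = π − 2δᵢ be the angles of the billiard polygon, one has Σ_{i=1}^{n} cos αᵢ = J·L − n. -/

import Mathlib

open Real

/-- Corollary: with `αᵢ = π - 2 δᵢ` the angles of the billiard polygon, `∑ cos αᵢ = J·L - n`. -/
theorem stmt_5
    (a₁ a₂ : ℝ) (ha₁ : 0 < a₁) (ha₂ : 0 < a₂)
    (h : ℝ → ℝ)
    (hh : ∀ x : ℝ, h x = Real.sqrt (a₁ ^ 2 * Real.cos x ^ 2 + a₂ ^ 2 * Real.sin x ^ 2))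
    (n : ℕ) (hn : 2 ≤ n)
    (φ ψ δ : ℕ → ℝ)
    (hφ : φ n = φ 0 + 2 * Real.pi)
    (hψ : ∀ i ∈ Finset.Icc 1 n, ψ i = (φ (i - 1) + φ i) / 2)
    (hδ : ∀ i ∈ Finset.Icc 1 n, δ i = (φ i - φ (i - 1)) / 2)
    (M : ℕ → EuclideanSpace ℝ (Fin 2))
    (hM : ∀ i ∈ Finset.Icc 1 n, M i
        = h (ψ i) • (WithLp.toLp 2 ![Real.cos (ψ i), Real.sin (ψ i)] : EuclideanSpace ℝ (Fin 2))
        + deriv h (ψ i) • (WithLp.toLp 2 ![-Real.sin (ψ i), Real.cos (ψ i)] : EuclideanSpace ℝ (Fin 2)))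
    (hMwrap : M (n + 1) = M 1)
    (chord : ∀ i ∈ Finset.Icc 1 n, ∃ t : ℝ, 0 < t ∧
        M (i + 1) - M i = t • (WithLp.toLp 2 ![-Real.sin (φ i), Real.cos (φ i)] : EuclideanSpace ℝ (Fin 2)))
    (J : ℝ) (hJ : 0 < J)
    (hJoach : ∀ i ∈ Finset.Icc 1 n, Real.sin (δ i) = J * h (ψ i))
    (L : ℝ) (hL : L = ∑ i ∈ Finset.Icc 1 n, ‖M (i + 1) - M i‖)
    : ∑ i ∈ Finset.Icc 1 n, Real.cos (Real.pi - 2 * δ i) = J * L - n := by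
  set A : ℕ → ℝ := fun j => h (ψ j) * Real.sin (δ j) + deriv h (ψ j) * Real.cos (δ j) with hA
  set B : ℕ → ℝ := fun j => h (ψ j) * Real.sin (δ j) - deriv h (ψ j) * Real.cos (δ j) with hB
  have hM0 : ∀ j ∈ Finset.Icc 1 n, M j 0
      = h (ψ j) * Real.cos (ψ j) - deriv h (ψ j) * Real.sin (ψ j) := by
    intro j hj
    rw [hM j hj]
    simp [PiLp.add_apply, PiLp.smul_apply]
    ring
  have hM1 : ∀ j ∈ Finset.Icc 1 n, M j 1
      = h (ψ j) * Real.sin (ψ j) + deriv h (ψ j) * Real.cos (ψ j) := by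
    intro j hj
    rw [hM j hj]
    simp [PiLp.add_apply, PiLp.smul_apply]
  -- key per-index formula
  have key : ∀ i ∈ Finset.Icc 1 n, ‖M (i + 1) - M i‖
      = A (if i = n then 1 else i + 1) + B i := by
    intro i hi
    obtain ⟨hi1, hin⟩ := Finset.mem_Icc.mp hi
    obtain ⟨t, ht, heq⟩ := chord i hi
    set j : ℕ := if i = n then 1 else i + 1 with hjdef
    have hj : j ∈ Finset.Icc 1 n := by
      rw [hjdef]
      split
      · exact Finset.mem_Icc.mpr ⟨le_refl 1, by omega⟩
      · exact Finset.mem_Icc.mpr ⟨by omega, by omega⟩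
    have hMj : M (i + 1) = M j := by
      rw [hjdef]
      split
      · next hc => rw [hc, hMwrap]
      · rfl
    -- norm equals t
    have hnorm : ‖M (i + 1) - M i‖ = t := by
      rw [heq, norm_smul, EuclideanSpace.norm_eq]
      simp only [Fin.sum_univ_two, Matrix.cons_val_zero, Matrix.cons_val_one, Matrix.head_cons,
        Real.norm_eq_abs, sq_abs]
      rw [show (-Real.sin (φ i)) ^ 2 + Real.cos (φ i) ^ 2 = 1 by
        nlinarith [Real.sin_sq_add_cos_sq (φ i)]]
      rw [Real.sqrt_one, mul_one, abs_of_pos ht]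
    rw [hnorm]
    -- components of the chord
    have e0 : M j 0 - M i 0 = t * (-Real.sin (φ i)) := by
      rw [← hMj]
      have := congrArg (fun v => v 0) heq
      simpa [PiLp.sub_apply, PiLp.smul_apply] using this
    have e1 : M j 1 - M i 1 = t * Real.cos (φ i) := by
      rw [← hMj]
      have := congrArg (fun v => v 1) heq
      simpa [PiLp.sub_apply, PiLp.smul_apply] using this
    -- angle relations
    have hsj : Real.sin (δ j) = Real.sin (ψ j - φ i) := by
      rw [hjdef]
      split
      · next hc =>
        subst hc
        have h1 : ψ 1 = (φ 0 + φ 1) / 2 := by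
          have := hψ 1 (Finset.mem_Icc.mpr ⟨le_refl 1, by omega⟩); simpa using this
        have h2 : δ 1 = (φ 1 - φ 0) / 2 := by
          have := hδ 1 (Finset.mem_Icc.mpr ⟨le_refl 1, by omega⟩); simpa using this
        have : ψ 1 - φ i = δ 1 - 2 * Real.pi := by rw [h1, h2, hφ]; ring
        rw [this, Real.sin_sub_two_pi]
      · next hc =>
        have hmem : i + 1 ∈ Finset.Icc 1 n := Finset.mem_Icc.mpr ⟨by omega, by omega⟩
        have h1 : ψ (i + 1) = (φ i + φ (i + 1)) / 2 := by
          have := hψ (i + 1) hmem; simpa using this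
        have h2 : δ (i + 1) = (φ (i + 1) - φ i) / 2 := by
          have := hδ (i + 1) hmem; simpa using this
        have : ψ (i + 1) - φ i = δ (i + 1) := by rw [h1, h2]; ring
        rw [this]
    have hcj : Real.cos (δ j) = Real.cos (ψ j - φ i) := by
      rw [hjdef]
      split
      · next hc =>
        subst hc
        have h1 : ψ 1 = (φ 0 + φ 1) / 2 := by
          have := hψ 1 (Finset.mem_Icc.mpr ⟨le_refl 1, by omega⟩); simpa using this
        have h2 : δ 1 = (φ 1 - φ 0) / 2 := by
          have := hδ 1 (Finset.mem_Icc.mpr ⟨le_refl 1, by omega⟩); simpa using this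
        have : ψ 1 - φ i = δ 1 - 2 * Real.pi := by rw [h1, h2, hφ]; ring
        rw [this, Real.cos_sub_two_pi]
      · next hc =>
        have hmem : i + 1 ∈ Finset.Icc 1 n := Finset.mem_Icc.mpr ⟨by omega, by omega⟩
        have h1 : ψ (i + 1) = (φ i + φ (i + 1)) / 2 := by
          have := hψ (i + 1) hmem; simpa using this
        have h2 : δ (i + 1) = (φ (i + 1) - φ i) / 2 := by
          have := hδ (i + 1) hmem; simpa using this
        have : ψ (i + 1) - φ i = δ (i + 1) := by rw [h1, h2]; ring
        rw [this]
    have hdi : δ i = φ i - ψ i := by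
      have h1 := hψ i hi
      have h2 := hδ i hi
      rw [h1] at *; rw [h2]; ring
    -- conclude
    have hteq : t = -Real.sin (φ i) * (M j 0 - M i 0) + Real.cos (φ i) * (M j 1 - M i 1) := by
      rw [e0, e1]
      nlinarith [Real.sin_sq_add_cos_sq (φ i)]
    rw [hteq, hM0 j hj, hM0 i hi, hM1 j hj, hM1 i hi, hA, hB]
    simp only
    rw [hsj, hcj, hdi, Real.sin_sub, Real.cos_sub, Real.sin_sub, Real.cos_sub]
    ring
  -- reindexing: ∑ A (σ i) = ∑ A i
  have hreindex : ∑ i ∈ Finset.Icc 1 n, A (if i = n then 1 else i + 1)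
      = ∑ i ∈ Finset.Icc 1 n, A i := by
    apply Finset.sum_nbij' (i := fun i => if i = n then 1 else i + 1)
      (j := fun i => if i = 1 then n else i - 1)
    · intro a ha
      obtain ⟨h1, h2⟩ := Finset.mem_Icc.mp ha
      split <;> exact Finset.mem_Icc.mpr (by omega)
    · intro a ha
      obtain ⟨h1, h2⟩ := Finset.mem_Icc.mp ha
      split <;> exact Finset.mem_Icc.mpr (by omega)
    · intro a ha
      obtain ⟨h1, h2⟩ := Finset.mem_Icc.mp ha
      split <;> split <;> omega
    · intro a ha
      obtain ⟨h1, h2⟩ := Finset.mem_Icc.mp ha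
      split <;> split <;> omega
    · intro a ha
      rfl
  -- main computation
  have hsum : J * L = ∑ i ∈ Finset.Icc 1 n, 2 * Real.sin (δ i) ^ 2 := by
    rw [hL, Finset.sum_congr rfl key, Finset.sum_add_distrib, hreindex,
      ← Finset.sum_add_distrib, Finset.mul_sum]
    apply Finset.sum_congr rfl
    intro i hi
    have hJo := hJoach i hi
    rw [hA, hB]
    simp only
    rw [hJo]
    ring
  have hcard : ((Finset.Icc 1 n).card : ℝ) = n := by
    rw [Nat.card_Icc]
    have : n + 1 - 1 = n := by omega
    rw [this]
  calc ∑ i ∈ Finset.Icc 1 n, Real.cos (Real.pi - 2 * δ i)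
      = ∑ i ∈ Finset.Icc 1 n, (2 * Real.sin (δ i) ^ 2 - 1) := by
        apply Finset.sum_congr rfl
        intro i _
        rw [Real.cos_pi_sub, Real.cos_two_mul]
        nlinarith [Real.sin_sq_add_cos_sq (δ i)]
    _ = (∑ i ∈ Finset.Icc 1 n, 2 * Real.sin (δ i) ^ 2) - n := by
        rw [Finset.sum_sub_distrib, Finset.sum_const, nsmul_eq_mul, mul_one, hcard]
    _ = J * L - n := by rw [hsum]
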